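/- Let δ ∈ (0,1/2), η > 0, and set θ = 3(1−δ)η/δ. Let μ_j = δ μ_{j,F} + (1−δ) μ_{j,B} ∈ P_δ for j = 1,2. Then for every z ∈ S_F(θ)^c ∩ S_B(η), one has T(μ1 − μ2)(z) > 2(1−δ)η. -/

import Mathlib

open MeasureTheory Set

/-- CDF of `|f|` with respect to `ν`: `Λ(f)(t) = ν{z : |f(z)| < t}`. -/
noncomputable def Lambda {X : Type*} [MeasurableSpace X] (ν : Measure X) (f : X → ℝ) (t : ℝ) : ℝ :=
  (ν {z | |f z| < t}).toReal

/-- Inverse CDF: `f#(u) = sup {t : Λ(f)(t) ≤ u}`. -/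
noncomputable def invCDF {X : Type*} [MeasurableSpace X] (ν : Measure X) (f : X → ℝ) (u : ℝ) : ℝ :=
  sSup {t : ℝ | Lambda ν f t ≤ u}

/-- Witness function of the signed measure `μ₁ - μ₂`:
`U(μ₁-μ₂)(z) = ∫ K(z,x) dμ₁(x) - ∫ K(z,x) dμ₂(x)`. -/
noncomputable def witness {X : Type*} [MeasurableSpace X] (K : X → X → ℝ)
    (μ₁ μ₂ : Measure X) (z : X) : ℝ :=
  (∫ x, K z x ∂μ₁) - ∫ x, K z x ∂μ₂

/-- `kdiff(μ₁,μ₂;α) = (T(μ₁-μ₂))#(α)` where `T(μ₁-μ₂) = |U(μ₁-μ₂)|`. -/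
noncomputable def kdiff {X : Type*} [MeasurableSpace X] (ν : Measure X) (K : X → X → ℝ)
    (μ₁ μ₂ : Measure X) (α : ℝ) : ℝ :=
  invCDF ν (fun z => |witness K μ₁ μ₂ z|) α

/-- Mixture `δ μF + (1-δ) μB`. -/
noncomputable def mix {X : Type*} [MeasurableSpace X] (δ : ℝ) (μF μB : Measure X) : Measure X :=
  ENNReal.ofReal δ • μF + ENNReal.ofReal (1 - δ) • μB

/-- `S(η) = {z : T(μ₁-μ₂)(z) < η}`. -/
def Sset {X : Type*} [MeasurableSpace X] (K : X → X → ℝ) (μ₁ μ₂ : Measure X) (η : ℝ) : Set X :=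
  {z | |witness K μ₁ μ₂ z| < η}

/-- `G(θ,η) = (S_F(θ)ᶜ ∩ S_B(η)) ∪ (S_B(θ)ᶜ ∩ S_F(η))`. -/
def Gset {X : Type*} [MeasurableSpace X] (K : X → X → ℝ)
    (μ1F μ2F μ1B μ2B : Measure X) (θ η : ℝ) : Set X :=
  ((Sset K μ1F μ2F θ)ᶜ ∩ Sset K μ1B μ2B η) ∪ ((Sset K μ1B μ2B θ)ᶜ ∩ Sset K μ1F μ2F η)

lemma integral_mix {X : Type*} [MeasurableSpace X] (δ : ℝ) (hδ0 : 0 ≤ δ) (hδ1 : δ ≤ 1)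
    (μF μB : Measure X) (f : X → ℝ) (hF : Integrable f μF) (hB : Integrable f μB) :
    ∫ x, f x ∂(mix δ μF μB) = δ * ∫ x, f x ∂μF + (1 - δ) * ∫ x, f x ∂μB := by
  rw [mix, integral_add_measure (hF.smul_measure ENNReal.ofReal_ne_top)
      (hB.smul_measure ENNReal.ofReal_ne_top),
    integral_smul_measure, integral_smul_measure,
    ENNReal.toReal_ofReal hδ0, ENNReal.toReal_ofReal (by linarith)]
  simp [smul_eq_mul]

/-- with `θ = 3(1-δ)η/δ`, for every `z ∈ S_F(θ)ᶜ ∩ S_B(η)` one has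
`T(μ₁-μ₂)(z) > 2(1-δ)η`. -/
theorem stmt7 {X : Type*} [MetricSpace X] [MeasurableSpace X] [BorelSpace X]
    (K : X → X → ℝ) (hKmeas : Measurable (Function.uncurry K))
    (hKbd : ∃ C : ℝ, ∀ x y, |K x y| ≤ C)
    (δ : ℝ) (hδ : δ ∈ Ioo (0 : ℝ) (1 / 2))
    (η : ℝ) (hη : 0 < η)
    (μ1F μ1B μ2F μ2B : Measure X)
    [IsProbabilityMeasure μ1F] [IsProbabilityMeasure μ1B]
    [IsProbabilityMeasure μ2F] [IsProbabilityMeasure μ2B] :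
    ∀ z ∈ (Sset K μ1F μ2F (3 * (1 - δ) * η / δ))ᶜ ∩ Sset K μ1B μ2B η,
      2 * (1 - δ) * η < |witness K (mix δ μ1F μ1B) (mix δ μ2F μ2B) z| := by
  obtain ⟨C, hC⟩ := hKbd
  obtain ⟨hδ0, hδ2⟩ := hδ
  rintro z ⟨hF, hB⟩
  have hδ1 : δ ≤ 1 := by linarith
  have hint : ∀ (μ : Measure X) [IsProbabilityMeasure μ], Integrable (fun x => K z x) μ := by
    intro μ _
    refine ⟨(hKmeas.comp measurable_prodMk_left).aestronglyMeasurable, ?_⟩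
    exact HasFiniteIntegral.of_bounded (C := C) (Filter.Eventually.of_forall fun x => hC z x)
  have hw : witness K (mix δ μ1F μ1B) (mix δ μ2F μ2B) z
      = δ * witness K μ1F μ2F z + (1 - δ) * witness K μ1B μ2B z := by
    simp only [witness, integral_mix δ hδ0.le hδ1 _ _ _ (hint μ1F) (hint μ1B),
      integral_mix δ hδ0.le hδ1 _ _ _ (hint μ2F) (hint μ2B)]
    ring
  simp only [Sset, mem_compl_iff, mem_setOf_eq, not_lt] at hF hB
  have h1 : 3 * (1 - δ) * η ≤ δ * |witness K μ1F μ2F z| := by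
    rw [div_le_iff₀ hδ0] at hF; linarith [mul_comm (|witness K μ1F μ2F z|) δ]
  have h2 : (1 - δ) * |witness K μ1B μ2B z| < (1 - δ) * η := by
    apply mul_lt_mul_of_pos_left hB; linarith
  calc 2 * (1 - δ) * η = 3 * (1 - δ) * η - (1 - δ) * η := by ring
    _ < δ * |witness K μ1F μ2F z| - (1 - δ) * |witness K μ1B μ2B z| := by linarith
    _ ≤ |δ * witness K μ1F μ2F z| - |(1 - δ) * witness K μ1B μ2B z| := by
        rw [abs_mul, abs_mul, abs_of_nonneg hδ0.le, abs_of_nonneg (by linarith : (0:ℝ) ≤ 1 - δ)]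
    _ ≤ |δ * witness K μ1F μ2F z + (1 - δ) * witness K μ1B μ2B z| := by
        have := abs_add_le (δ * witness K μ1F μ2F z + (1 - δ) * witness K μ1B μ2B z)
          (-((1 - δ) * witness K μ1B μ2B z))
        simp at this; linarith [this, abs_mul δ (witness K μ1F μ2F z), abs_mul (1 - δ) (witness K μ1B μ2B z)]
    _ = |witness K (mix δ μ1F μ1B) (mix δ μ2F μ2B) z| := by rw [hw]
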